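/- Let G_1, ..., G_n be finite groups of pairwise coprime orders and G their direct product. Then SpecR(G) = {r_1 · ... · r_n : r_i ∈ SpecR(G_i)}. -/
import Mathlib


/-- The Reidemeister number of an endomorphism `φ`: the number of
`φ`-twisted conjugacy classes, where `x` and `y` are `φ`-conjugate iff
`x = z * y * (φ z)⁻¹` for some `z`. -/
noncomputable def twistedClasses {G : Type*} [Group G] (φ : G →* G) : ℕ :=
  Nat.card (Quot (fun x y : G => ∃ z : G, x = z * y * (φ z)⁻¹))

/-- The Reidemeister spectrum: the set of Reidemeister numbers of automorphisms. -/
noncomputable def reidSpec (G : Type*) [Group G] : Set ℕ :=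
  {r | ∃ φ : G ≃* G, twistedClasses φ.toMonoidHom = r}

set_option linter.unusedSectionVars false

lemma twRel_equivalence {G : Type*} [Group G] (φ : G →* G) :
    Equivalence (fun x y : G => ∃ z : G, x = z * y * (φ z)⁻¹) := by
  constructor
  · intro x; exact ⟨1, by simp⟩
  · rintro x y ⟨z, rfl⟩
    exact ⟨z⁻¹, by simp [map_inv]; group⟩
  · rintro x y w ⟨z, rfl⟩ ⟨u, rfl⟩
    exact ⟨z * u, by simp [map_mul]; group⟩

lemma twistedClasses_pi {n : ℕ} (G : Fin n → Type*) [∀ i, Group (G i)]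
    (ψ : (∀ i, G i) →* (∀ i, G i)) (ψi : ∀ i, G i →* G i)
    (h : ∀ g i, ψ g i = ψi i (g i)) :
    twistedClasses ψ = ∏ i, twistedClasses (ψi i) := by
  unfold twistedClasses
  rw [← Nat.card_pi]
  apply Nat.card_congr
  refine Equiv.ofBijective
    (Quot.lift (fun x i => Quot.mk _ (x i)) ?_) ⟨?_, ?_⟩
  · rintro x y ⟨z, rfl⟩
    funext i
    exact Quot.sound ⟨z i, by simp [h]⟩
  · intro q1 q2
    induction q1 using Quot.ind with | _ x =>
    induction q2 using Quot.ind with | _ y =>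
    intro hq
    have : ∀ i, ∃ z : G i, x i = z * y i * (ψi i z)⁻¹ := by
      intro i
      have := congrFun hq i
      exact ((twRel_equivalence (ψi i)).eqvGen_iff).mp (Quot.eq.mp this)
    choose z hz using this
    exact Quot.sound ⟨z, funext fun i => by simp [h, hz i]⟩
  · intro q
    refine ⟨Quot.mk _ (fun i => (q i).out), ?_⟩
    funext i
    simp [Quot.out_eq]

section decomp
variable {n : ℕ} (G : Fin n → Type*) [∀ i, Group (G i)] [∀ i, Finite (G i)]

lemma support_one (hcop : ∀ i j, i ≠ j → Nat.Coprime (Nat.card (G i)) (Nat.card (G j)))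
    (g : ∀ i, G i) (i j : Fin n) (hij : j ≠ i)
    (hg : orderOf g ∣ Nat.card (G i)) : g j = 1 := by
  have h1 : orderOf (g j) ∣ orderOf g := by
    apply orderOf_dvd_of_pow_eq_one
    have := pow_orderOf_eq_one g
    exact congrFun this j
  have h2 : orderOf (g j) ∣ Nat.card (G j) := orderOf_dvd_natCard _
  have h3 : orderOf (g j) ∣ 1 := (hcop i j (Ne.symm hij)) ▸ Nat.dvd_gcd (h1.trans hg) h2
  rw [orderOf_eq_one_iff.mp (Nat.eq_one_of_dvd_one h3)]

lemma single_support (hcop : ∀ i j, i ≠ j → Nat.Coprime (Nat.card (G i)) (Nat.card (G j)))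
    (ψ : (∀ i, G i) ≃* (∀ i, G i)) (i : Fin n) (x : G i) :
    ψ (Pi.mulSingle i x) = Pi.mulSingle i (ψ (Pi.mulSingle i x) i) := by
  have hord : orderOf (ψ (Pi.mulSingle i x)) ∣ Nat.card (G i) := by
    rw [show ψ (Pi.mulSingle i x) = ψ.toMonoidHom (Pi.mulSingle i x) from rfl,
      orderOf_injective ψ.toMonoidHom ψ.injective]
    apply orderOf_dvd_of_pow_eq_one
    have : (Pi.mulSingle i x) ^ Nat.card (G i) = Pi.mulSingle i (x ^ Nat.card (G i)) := by
      exact (map_pow (MonoidHom.mulSingle G i) x _).symm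
    rw [this, pow_card_eq_one', Pi.mulSingle_one]
  funext j
  by_cases hj : j = i
  · subst hj; simp
  · rw [support_one G hcop _ i j hj hord, Pi.mulSingle_eq_of_ne hj]

lemma coord_one (hcop : ∀ i j, i ≠ j → Nat.Coprime (Nat.card (G i)) (Nat.card (G j)))
    (ψ : (∀ i, G i) ≃* (∀ i, G i)) (i : Fin n) (g : ∀ i, G i) (hg : g i = 1) :
    ψ g i = 1 := by
  set M := ∏ j ∈ Finset.univ.erase i, Nat.card (G j) with hM
  have hgM : g ^ M = 1 := by
    funext j
    by_cases hj : j = i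
    · subst hj; simp [hg]
    · have : Nat.card (G j) ∣ M := Finset.dvd_prod_of_mem _
        (Finset.mem_erase.mpr ⟨hj, Finset.mem_univ j⟩)
      have := (orderOf_dvd_natCard (g j)).trans this
      simpa using orderOf_dvd_iff_pow_eq_one.mp this
  have hord : orderOf (ψ g) ∣ M := by
    apply orderOf_dvd_of_pow_eq_one
    rw [← map_pow, hgM, map_one]
  have hcopM : Nat.Coprime (Nat.card (G i)) M :=
    Nat.Coprime.prod_right fun j hj => hcop i j (Finset.mem_erase.mp hj).1.symm
  have h1 : orderOf (ψ g i) ∣ M := by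
    refine Nat.dvd_trans ?_ hord
    apply orderOf_dvd_of_pow_eq_one
    exact congrFun (pow_orderOf_eq_one (ψ g)) i
  have h2 : orderOf (ψ g i) ∣ Nat.card (G i) := orderOf_dvd_natCard _
  exact orderOf_eq_one_iff.mp (Nat.eq_one_of_dvd_one
    (hcopM ▸ Nat.dvd_gcd h2 h1))

end decomp

lemma decompose {n : ℕ} (G : Fin n → Type*) [∀ i, Group (G i)] [∀ i, Finite (G i)]
    (hcop : ∀ i j, i ≠ j → Nat.Coprime (Nat.card (G i)) (Nat.card (G j)))
    (ψ : (∀ i, G i) ≃* (∀ i, G i)) :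
    ∃ e : ∀ i, G i ≃* G i, ∀ g i, ψ g i = e i (g i) := by
  have key : ∀ (φ : (∀ i, G i) ≃* (∀ i, G i)) (g : ∀ i, G i) (i : Fin n),
      φ g i = φ (Pi.mulSingle i (g i)) i := by
    intro φ g i
    have hsplit : g = Pi.mulSingle i (g i) * ((Pi.mulSingle i (g i))⁻¹ * g) := by group
    have h1 : ((Pi.mulSingle i (g i))⁻¹ * g) i = 1 := by simp
    calc φ g i = (φ (Pi.mulSingle i (g i)) * φ ((Pi.mulSingle i (g i))⁻¹ * g)) i := by
          rw [← map_mul, ← hsplit]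
      _ = φ (Pi.mulSingle i (g i)) i * φ ((Pi.mulSingle i (g i))⁻¹ * g) i := rfl
      _ = φ (Pi.mulSingle i (g i)) i := by rw [coord_one G hcop φ i _ h1, mul_one]
  refine ⟨fun i =>
    { toFun := fun x => ψ (Pi.mulSingle i x) i
      invFun := fun x => ψ.symm (Pi.mulSingle i x) i
      left_inv := ?_
      right_inv := ?_
      map_mul' := ?_ }, ?_⟩
  · intro x
    show ψ.symm (Pi.mulSingle i (ψ (Pi.mulSingle i x) i)) i = x
    rw [← single_support G hcop ψ i x, ψ.symm_apply_apply, Pi.mulSingle_eq_same]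
  · intro x
    show ψ (Pi.mulSingle i (ψ.symm (Pi.mulSingle i x) i)) i = x
    rw [← single_support G hcop ψ.symm i x, ψ.apply_symm_apply, Pi.mulSingle_eq_same]
  · intro x y
    show ψ (Pi.mulSingle i (x * y)) i = ψ (Pi.mulSingle i x) i * ψ (Pi.mulSingle i y) i
    rw [show Pi.mulSingle i (x * y) = Pi.mulSingle i x * Pi.mulSingle i y from
      map_mul (MonoidHom.mulSingle G i) x y, map_mul, Pi.mul_apply]
  · intro g i
    exact key ψ g i

theorem stmt_8 {n : ℕ} (G : Fin n → Type*) [∀ i, Group (G i)] [∀ i, Finite (G i)]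
    (hcop : ∀ i j, i ≠ j → Nat.Coprime (Nat.card (G i)) (Nat.card (G j))) :
    reidSpec (∀ i, G i) =
      {r | ∃ f : Fin n → ℕ, (∀ i, f i ∈ reidSpec (G i)) ∧ r = ∏ i, f i} := by
  ext r
  constructor
  · rintro ⟨ψ, rfl⟩
    obtain ⟨e, he⟩ := decompose G hcop ψ
    refine ⟨fun i => twistedClasses (e i).toMonoidHom, fun i => ⟨e i, rfl⟩, ?_⟩
    exact twistedClasses_pi G ψ.toMonoidHom (fun i => (e i).toMonoidHom) he
  · rintro ⟨f, hf, rfl⟩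
    choose φ hφ using hf
    refine ⟨MulEquiv.piCongrRight φ, ?_⟩
    rw [twistedClasses_pi G _ (fun i => (φ i).toMonoidHom) (fun g i => rfl)]
    exact Finset.prod_congr rfl fun i _ => hφ i
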